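/- Let c > 0 and a₁, …, a_r > 0 be real numbers. Then there exists ε > 0 and an infinite set of positive integers K such that for every k ∈ K and every i, either ‖kc‖_{a_i} = 0 or ‖kc‖_{a_i} > ε. Consequently, it is impossible that 0 < ‖kc‖_{a_i} < ε holds for all sufficiently large k and some choice of i = i(k). -/
import Mathlib


/-- distance from `t` to the nearest point of `aℤ` -/
noncomputable def distA (t a : ℝ) : ℝ := sInf {d : ℝ | ∃ m : ℤ, d = |t - m * a|}

lemma distA_set_nonempty (t a : ℝ) : {d : ℝ | ∃ m : ℤ, d = |t - m * a|}.Nonempty :=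
  ⟨|t - (0:ℤ) * a|, 0, rfl⟩

lemma distA_bddBelow (t a : ℝ) : BddBelow {d : ℝ | ∃ m : ℤ, d = |t - m * a|} :=
  ⟨0, by rintro x ⟨m, rfl⟩; exact abs_nonneg _⟩

lemma distA_le (t a : ℝ) (m : ℤ) : distA t a ≤ |t - m * a| :=
  csInf_le (distA_bddBelow t a) ⟨m, rfl⟩

lemma le_distA (t a b : ℝ) (h : ∀ m : ℤ, b ≤ |t - m * a|) : b ≤ distA t a :=
  le_csInf (distA_set_nonempty t a) (by rintro x ⟨m, rfl⟩; exact h m)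

lemma distA_nonneg (t a : ℝ) : 0 ≤ distA t a :=
  le_distA t a 0 (fun m => abs_nonneg _)

lemma distA_add_le (x y a : ℝ) : distA (x + y) a ≤ distA x a + distA y a := by
  have key : ∀ m n : ℤ, distA (x+y) a ≤ |x - m*a| + |y - n*a| := by
    intro m n
    calc distA (x+y) a ≤ |x + y - ((m+n : ℤ):ℝ)*a| := distA_le _ _ _
      _ ≤ |x - m*a| + |y - n*a| := by
          have h : x + y - ((m + n : ℤ):ℝ) * a = (x - (m:ℝ)*a) + (y - (n:ℝ)*a) := by
            push_cast; ring
          rw [h]; exact abs_add_le _ _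
  have h1 : ∀ m : ℤ, distA (x+y) a - |x - (m:ℝ)*a| ≤ distA y a := fun m =>
    le_distA _ _ _ (fun n => by linarith [key m n])
  have h2 : distA (x+y) a - distA y a ≤ distA x a :=
    le_distA _ _ _ (fun m => by linarith [h1 m])
  linarith

lemma distA_neg (t a : ℝ) : distA (-t) a = distA t a := by
  unfold distA
  congr 1
  ext x
  constructor
  · rintro ⟨m, rfl⟩
    refine ⟨-m, ?_⟩
    have h1 : -t - (m:ℝ)*a = -(t - ((-m : ℤ):ℝ)*a) := by push_cast; ring
    rw [h1, abs_neg]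
  · rintro ⟨m, rfl⟩
    refine ⟨-m, ?_⟩
    have h1 : t - (m:ℝ)*a = -(-t - ((-m : ℤ):ℝ)*a) := by push_cast; ring
    rw [h1, abs_neg]

lemma distA_eq_zero_iff (t a : ℝ) (ha : 0 < a) : distA t a = 0 ↔ ∃ m : ℤ, t = m * a := by
  constructor
  · intro h
    have h2 : distA t a < a/2 := by rw [h]; linarith
    obtain ⟨x, ⟨m, rfl⟩, hx⟩ := exists_lt_of_csInf_lt (distA_set_nonempty t a) h2
    refine ⟨m, ?_⟩
    have hge : |t - (m:ℝ)*a| ≤ distA t a := by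
      apply le_distA
      intro n
      rcases eq_or_ne n m with rfl | hne
      · exact le_rfl
      · have h1 : (1:ℝ) ≤ |((m - n : ℤ):ℝ)| := by
          rw [← Int.cast_abs]
          exact_mod_cast Int.one_le_abs (sub_ne_zero.mpr (Ne.symm hne))
        have e1 : |((m:ℝ) - n)| * a ≤ |((m:ℝ)-n)*a| + 0 := by
          rw [abs_mul, abs_of_pos ha]; linarith
        have e2 : |((m:ℝ)-n)*a| ≤ |t - (n:ℝ)*a| + |t - (m:ℝ)*a| := by
          have he : ((m:ℝ)-n)*a = (t - (n:ℝ)*a) - (t - (m:ℝ)*a) := by ring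
          rw [he]
          exact abs_sub _ _
        have h1' : (1:ℝ) ≤ |((m:ℝ) - n)| := by push_cast at h1; exact h1
        have hmul : a ≤ |((m:ℝ) - n)| * a := le_mul_of_one_le_left ha.le h1'
        linarith
    have hle : distA t a ≤ |t - (m:ℝ)*a| := distA_le _ _ _
    have : |t - (m:ℝ)*a| = 0 := by linarith
    exact (sub_eq_zero.mp (abs_eq_zero.mp this)).symm ▸ rfl
  · rintro ⟨m, rfl⟩
    refine le_antisymm ?_ (distA_nonneg _ _)
    have := distA_le ((m:ℝ)*a) a m
    simpa using this

/-- simultaneous recurrence by pigeonhole -/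
lemma simul_recurrence (r : ℕ) (c : ℝ) (a : Fin r → ℝ) (ha : ∀ i, 0 < a i)
    (δ : ℝ) (hδ : 0 < δ) :
    {d : ℕ | 0 < d ∧ ∀ i, distA (d * c) (a i) < δ}.Infinite := by
  set N : ℕ := (Finset.univ.sup fun i => ⌈a i / δ⌉₊) + 1 with hNdef
  have hN0 : 0 < N := Nat.succ_pos _
  have hNa : ∀ i, a i / N < δ := by
    intro i
    have h1 : a i / δ ≤ (⌈a i / δ⌉₊ : ℝ) := Nat.le_ceil _
    have h2 : (⌈a i / δ⌉₊ : ℝ) < N := by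
      have hle : ⌈a i / δ⌉₊ ≤ Finset.univ.sup fun i => ⌈a i / δ⌉₊ :=
        Finset.le_sup (f := fun i => ⌈a i / δ⌉₊) (Finset.mem_univ i)
      have : ⌈a i / δ⌉₊ < N := by omega
      exact_mod_cast this
    have h3 : a i / δ < N := lt_of_le_of_lt h1 h2
    have h4 : a i < δ * N := by
      rw [div_lt_iff₀ hδ] at h3; linarith
    rw [div_lt_iff₀ (by exact_mod_cast hN0)]
    linarith
  -- the coloring
  have hfr : ∀ (m : ℕ) (i : Fin r), Int.fract ((m:ℝ)*c / a i) * N < N := by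
    intro m i
    have h1 : Int.fract ((m:ℝ)*c / a i) < 1 := Int.fract_lt_one _
    have : Int.fract ((m:ℝ)*c / a i) * N < 1 * N := by
      apply mul_lt_mul_of_pos_right h1
      exact_mod_cast hN0
    simpa using this
  set f : ℕ → (Fin r → Fin N) := fun m i =>
    ⟨⌊Int.fract ((m:ℝ)*c / a i) * N⌋₊,
      (Nat.floor_lt (mul_nonneg (Int.fract_nonneg _) (Nat.cast_nonneg _))).mpr (hfr m i)⟩
    with hfdef
  obtain ⟨y, hy⟩ := Finite.exists_infinite_fiber f
  have hP : (f ⁻¹' {y}).Infinite := Set.infinite_coe_iff.mp hy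
  obtain ⟨m₀, hm₀⟩ := hP.nonempty
  have hP' : (f ⁻¹' {y} ∩ Set.Ioi m₀).Infinite := by
    have he : f ⁻¹' {y} ∩ Set.Ioi m₀ = f ⁻¹' {y} \ Set.Iic m₀ := by
      ext x; simp [Set.mem_Ioi, Set.mem_Iic, not_le]
    rw [he]
    exact hP.diff (Set.finite_Iic m₀)
  have himg : ((fun x => x - m₀) '' (f ⁻¹' {y} ∩ Set.Ioi m₀)).Infinite := by
    apply hP'.image
    intro p hp q hq hpq
    change p - m₀ = q - m₀ at hpq
    have h1 : m₀ < p := hp.2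
    have h2 : m₀ < q := hq.2
    omega
  apply Set.Infinite.mono _ himg
  rintro _ ⟨x, ⟨hxP, hxI⟩, rfl⟩
  have hxm : m₀ < x := hxI
  refine ⟨Nat.sub_pos_of_lt hxm, fun i => ?_⟩
  -- floors agree
  have hfx : f x = y := hxP
  have hfm : f m₀ = y := hm₀
  have hfeq : (f x i : ℕ) = (f m₀ i : ℕ) := by rw [hfx, hfm]
  set u : ℝ := Int.fract ((x:ℝ)*c / a i) with hu
  set u₀ : ℝ := Int.fract ((m₀:ℝ)*c / a i) with hu₀
  have hfloor : ⌊u * N⌋₊ = ⌊u₀ * N⌋₊ := hfeq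
  -- bound |u - u₀| < 1/N
  have b1 : (⌊u*N⌋₊:ℝ) ≤ u*N := Nat.floor_le (mul_nonneg (Int.fract_nonneg _) (Nat.cast_nonneg _))
  have b2 : u*N < ⌊u*N⌋₊ + 1 := Nat.lt_floor_add_one _
  have b3 : (⌊u*N⌋₊:ℝ) ≤ u₀*N := by
    rw [hfloor]
    exact Nat.floor_le (mul_nonneg (Int.fract_nonneg _) (Nat.cast_nonneg _))
  have b4 : u₀*N < ⌊u*N⌋₊ + 1 := by rw [hfloor]; exact Nat.lt_floor_add_one _
  have hNpos : (0:ℝ) < N := by exact_mod_cast hN0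
  have habs : |u - u₀| < 1/N := by
    rw [abs_sub_lt_iff]
    constructor <;> rw [lt_div_iff₀ hNpos] <;> nlinarith
  -- compute
  have hai : (a i) ≠ 0 := (ha i).ne'
  have e : ((x:ℝ)*c) - ((m₀:ℝ)*c) - ((⌊(x:ℝ)*c/a i⌋ - ⌊(m₀:ℝ)*c/a i⌋ : ℤ):ℝ) * a i
      = a i * (u - u₀) := by
    rw [hu, hu₀]
    unfold Int.fract
    push_cast
    field_simp
    ring
  have hcast : ((x - m₀ : ℕ):ℝ) = (x:ℝ) - (m₀:ℝ) := by
    push_cast [Nat.cast_sub hxm.le]; ring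
  calc distA (((x - m₀:ℕ):ℝ) * c) (a i)
      ≤ |((x - m₀:ℕ):ℝ)*c - ((⌊(x:ℝ)*c/a i⌋ - ⌊(m₀:ℝ)*c/a i⌋ : ℤ):ℝ) * a i| :=
        distA_le _ _ _
    _ = a i * |u - u₀| := by
        rw [hcast, show ((x:ℝ) - (m₀:ℝ))*c = ((x:ℝ)*c) - ((m₀:ℝ)*c) from by ring, e,
          abs_mul, abs_of_pos (ha i)]
    _ < δ := by
        have := mul_lt_mul_of_pos_left habs (ha i)
        have h2 := hNa i
        rw [mul_one_div] at this
        linarith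

theorem uniform_gap_infinitely_often (r : ℕ) (c : ℝ) (hc : 0 < c)
    (a : Fin r → ℝ) (ha : ∀ i, 0 < a i) :
    (∃ ε > 0, ∃ K : Set ℕ, K.Infinite ∧
        ∀ k ∈ K, 0 < k ∧
          ∀ i, distA (k * c) (a i) = 0 ∨ ε < distA (k * c) (a i)) ∧
    ¬ (∀ ε > 0, ∃ N : ℕ, ∀ k ≥ N,
        ∃ i, 0 < distA (k * c) (a i) ∧ distA (k * c) (a i) < ε) := by
  have main : ∃ ε > 0, ∃ K : Set ℕ, K.Infinite ∧
      ∀ k ∈ K, 0 < k ∧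
        ∀ i, distA (k * c) (a i) = 0 ∨ ε < distA (k * c) (a i) := by
    classical
    set F : Finset ℝ :=
      insert 1 ((Finset.univ : Finset (Fin r)).image
        fun i => if distA c (a i) = 0 then 1 else distA c (a i)) with hF
    have hFne : F.Nonempty := ⟨1, Finset.mem_insert_self _ _⟩
    set m := F.min' hFne with hm
    have hm_pos : 0 < m := by
      rw [hm]
      rw [Finset.lt_min'_iff]
      intro x hx
      rw [hF] at hx
      rcases Finset.mem_insert.mp hx with h | h
      · rw [h]; norm_num
      · obtain ⟨i, _, hi⟩ := Finset.mem_image.mp h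
        rw [← hi]
        split_ifs with h0
        · norm_num
        · exact lt_of_le_of_ne (distA_nonneg _ _) (Ne.symm h0)
    have hm_le : ∀ i, distA c (a i) ≠ 0 → m ≤ distA c (a i) := by
      intro i h0
      apply F.min'_le
      rw [hF]
      apply Finset.mem_insert_of_mem
      apply Finset.mem_image.mpr
      exact ⟨i, Finset.mem_univ i, by rw [if_neg h0]⟩
    have hδ : (0:ℝ) < m/4 := by linarith
    have hD := simul_recurrence r c a ha (m/4) hδ
    refine ⟨m/2, by linarith, (fun d => 1 + d) '' {d : ℕ | 0 < d ∧ ∀ i, distA (d * c) (a i) < m/4},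
      hD.image (fun x _ y _ h => by omega), ?_⟩
    rintro _ ⟨dd, ⟨hdd0, hddδ⟩, rfl⟩
    refine ⟨Nat.lt_of_lt_of_le Nat.zero_lt_one (Nat.le_add_right 1 dd), ?_⟩
    intro i
    by_cases h0 : distA c (a i) = 0
    · left
      obtain ⟨n, hn⟩ := (distA_eq_zero_iff c (a i) (ha i)).mp h0
      apply (distA_eq_zero_iff _ (a i) (ha i)).mpr
      refine ⟨(1 + dd) * n, ?_⟩
      push_cast
      rw [hn]; ring
    · right
      have htri : distA c (a i) ≤ distA (((1 + dd : ℕ):ℝ) * c) (a i) + distA ((dd:ℝ) * c) (a i) := by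
        have hsplit : c = ((1 + dd : ℕ):ℝ) * c + (-((dd:ℝ) * c)) := by push_cast; ring
        calc distA c (a i) = distA (((1 + dd : ℕ):ℝ) * c + (-((dd:ℝ) * c))) (a i) := by
              rw [← hsplit]
          _ ≤ distA (((1 + dd : ℕ):ℝ) * c) (a i) + distA (-((dd:ℝ) * c)) (a i) :=
              distA_add_le _ _ _
          _ = distA (((1 + dd : ℕ):ℝ) * c) (a i) + distA ((dd:ℝ) * c) (a i) := by
              rw [distA_neg]
      have h1 := hm_le i h0
      have h2 := hddδ i
      linarith
  refine ⟨main, ?_⟩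
  obtain ⟨ε, hε, K, hK, hKprop⟩ := main
  intro h
  obtain ⟨N, hN⟩ := h ε hε
  obtain ⟨k, hk⟩ := (hK.diff (Set.finite_Iic N)).nonempty
  have hkK : k ∈ K := hk.1
  have hkN' : N ≤ k := by
    have h2 := hk.2
    simp only [Set.mem_Iic, not_le] at h2
    omega
  obtain ⟨i, hi1, hi2⟩ := hN k hkN'
  rcases (hKprop k hkK).2 i with h0 | hgt
  · exact absurd h0 (ne_of_gt hi1)
  · linarith
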